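/- arXiv:0904.4851 — 2 statements merged into one kernel-verified Lean document; each statement's English description precedes it below -/
import Mathlib

section
/- Let G be a graph on vertex set V with |V| = n, let p > 0 and 0 < ε < 1/10. Suppose: (a) every vertex has degree at most (1+3ε)pn, and (b) for a subset I ⊆ V with |I| ≥ (1-ε)n, the number of edges between I and V∖I satisfies e(I, V∖I) ≥ |I|(n-|I|)p(1-3ε). Then the set X = {v ∈ V∖I : |Γ(v) ∩ I| < (1 - 3√ε)pn} satisfies |X| ≤ 3√ε·(n - |I|). -/
set_option maxHeartbeats 1000000

open Finset

/-- Double counting: if every vertex of `G` has degree at most `(1+3ε)pn` and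
`e(I, V∖I) ≥ |I|(n-|I|)p(1-3ε)` for a set `I` with `|I| ≥ (1-ε)n`, then the set of
vertices outside `I` with fewer than `(1-3√ε)pn` neighbours in `I` has size at most
`3√ε(n - |I|)`. -/
theorem few_low_degree_vertices {V : Type*} [Fintype V] [DecidableEq V]
    (G : SimpleGraph V) [DecidableRel G.Adj] (p ε : ℝ) (hp : 0 < p)
    (hε0 : 0 < ε) (hε1 : ε < 1 / 10)
    (n : ℕ) (hn : n = Fintype.card V)
    (I : Finset V)
    (hdeg : ∀ v : V, (G.degree v : ℝ) ≤ (1 + 3 * ε) * p * n)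
    (hI : ((1 - ε) * n : ℝ) ≤ I.card)
    (hedges : ((I.card : ℝ) * ((n : ℝ) - I.card) * p * (1 - 3 * ε)) ≤
      ∑ v ∈ Iᶜ, ((G.neighborFinset v ∩ I).card : ℝ)) :
    (((Iᶜ).filter (fun v =>
        ((G.neighborFinset v ∩ I).card : ℝ) < (1 - 3 * Real.sqrt ε) * p * n)).card : ℝ)
      ≤ 3 * Real.sqrt ε * ((n : ℝ) - I.card) := by
  set s := Real.sqrt ε with hs
  have hs0 : 0 < s := Real.sqrt_pos.mpr hε0
  have hs2 : s ^ 2 = ε := Real.sq_sqrt hε0.le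
  set f : V → ℝ := fun v => ((G.neighborFinset v ∩ I).card : ℝ) with hf
  set Pr : V → Prop := fun v => f v < (1 - 3 * s) * p * n with hPr
  have hIcard : I.card ≤ n := by rw [hn]; exact Finset.card_le_univ I
  have hcompl : (Iᶜ).card = n - I.card := by rw [Finset.card_compl, hn]
  have hXsub : ((Iᶜ).filter Pr).card ≤ (Iᶜ).card := Finset.card_filter_le _ _
  rcases Nat.eq_zero_or_pos n with h0 | hn0
  · have hI0 : I.card = 0 := by omega
    have hX0 : ((Iᶜ).filter Pr).card = 0 := by omega
    rw [hX0, hI0, h0]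
    simp
  · -- main case
    have hn' : (0:ℝ) < n := by exact_mod_cast hn0
    have hm0 : (0:ℝ) ≤ (n:ℝ) - I.card := by
      have : (I.card : ℝ) ≤ n := by exact_mod_cast hIcard
      linarith
    -- split the sum
    have hsplit : ∑ v ∈ Iᶜ, f v
        = ∑ v ∈ (Iᶜ).filter Pr, f v + ∑ v ∈ (Iᶜ).filter (fun v => ¬ Pr v), f v :=
      (Finset.sum_filter_add_sum_filter_not _ _ _).symm
    have hbound1 : ∑ v ∈ (Iᶜ).filter Pr, f v
        ≤ (((Iᶜ).filter Pr).card : ℝ) * ((1 - 3 * s) * p * n) := by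
      have := Finset.sum_le_card_nsmul ((Iᶜ).filter Pr) f ((1 - 3 * s) * p * n)
        (fun v hv => le_of_lt (Finset.mem_filter.mp hv).2)
      simpa [nsmul_eq_mul] using this
    have hbound2 : ∑ v ∈ (Iᶜ).filter (fun v => ¬ Pr v), f v
        ≤ (((Iᶜ).filter (fun v => ¬ Pr v)).card : ℝ) * ((1 + 3 * ε) * p * n) := by
      have := Finset.sum_le_card_nsmul ((Iᶜ).filter (fun v => ¬ Pr v)) f
        ((1 + 3 * ε) * p * n) (fun v _ => by
          have h2 : (G.neighborFinset v ∩ I).card ≤ G.degree v := by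
            rw [← G.card_neighborFinset_eq_degree]
            exact Finset.card_le_card (Finset.inter_subset_left)
          have h1 : f v ≤ (G.degree v : ℝ) := by
            simp only [hf]; exact_mod_cast h2
          exact h1.trans (hdeg v))
      simpa [nsmul_eq_mul] using this
    have hcards : (((Iᶜ).filter Pr).card : ℝ) + (((Iᶜ).filter (fun v => ¬ Pr v)).card : ℝ)
        = (n : ℝ) - I.card := by
      have h1 : ((Iᶜ).filter Pr).card + ((Iᶜ).filter (fun v => ¬ Pr v)).card = (Iᶜ).card :=
        Finset.card_filter_add_card_filter_not _
      have h2 : ((Iᶜ).card : ℝ) = (n : ℝ) - I.card := by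
        rw [hcompl]; push_cast [Nat.cast_sub hIcard]; ring
      push_cast [← h1] at h2 ⊢
      linarith
    set A : ℝ := (((Iᶜ).filter Pr).card : ℝ) with hA
    set B : ℝ := (((Iᶜ).filter (fun v => ¬ Pr v)).card : ℝ) with hB
    set m : ℝ := (n:ℝ) - I.card with hmdef
    have hA0 : 0 ≤ A := by positivity
    have hB0 : 0 ≤ B := by positivity
    have hkey : (I.card : ℝ) * m * p * (1 - 3 * ε)
        ≤ A * ((1 - 3 * s) * p * n) + B * ((1 + 3 * ε) * p * n) := by
      calc (I.card : ℝ) * m * p * (1 - 3 * ε) ≤ ∑ v ∈ Iᶜ, f v := hedges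
        _ = _ := hsplit
        _ ≤ _ := add_le_add hbound1 hbound2
    -- divide by p
    have hkey2 : (I.card : ℝ) * m * (1 - 3 * ε)
        ≤ A * ((1 - 3 * s) * n) + B * ((1 + 3 * ε) * n) := by
      have := hkey
      nlinarith [hp]
    have hε' : (1 : ℝ) - 3 * ε > 0 := by linarith
    have hIlb : (1 - ε) * n ≤ (I.card : ℝ) := hI
    -- lower bound using |I| ≥ (1-ε)n
    have hkey3 : (1 - ε) * n * m * (1 - 3 * ε)
        ≤ A * ((1 - 3 * s) * n) + B * ((1 + 3 * ε) * n) := by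
      have h := mul_le_mul_of_nonneg_right (mul_le_mul_of_nonneg_right hIlb hm0) hε'.le
      linarith
    -- divide by n
    have hkey4 : (1 - ε) * m * (1 - 3 * ε) ≤ A * (1 - 3 * s) + B * (1 + 3 * ε) := by
      nlinarith [hn']
    have hBm : B = m - A := by linarith
    rw [hBm] at hkey4
    -- now: (1-ε)(1-3ε)m ≤ A(1-3s) + (m-A)(1+3ε), so A(3ε+3s) ≤ m(7ε-3ε²)
    have hfin : A * (3 * ε + 3 * s) ≤ m * (7 * ε - 3 * ε ^ 2) := by linarith [hkey4]
    have hεs : ε = s ^ 2 := hs2.symm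
    rw [hεs] at hfin
    have h1 : m * (7 * s ^ 2 - 3 * (s ^ 2) ^ 2) ≤ 3 * s * m * (3 * s ^ 2 + 3 * s) := by
      nlinarith [mul_nonneg hm0 (sq_nonneg s),
        mul_nonneg hm0 (mul_nonneg (sq_nonneg s) hs0.le),
        mul_nonneg (mul_nonneg hm0 (sq_nonneg s)) (sq_nonneg s)]
    have hpos : (0:ℝ) < 3 * s ^ 2 + 3 * s := by positivity
    show A ≤ 3 * s * m
    have h2 : A * (3 * s ^ 2 + 3 * s) ≤ 3 * s * m * (3 * s ^ 2 + 3 * s) := by linarith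
    exact le_of_mul_le_mul_right h2 hpos
end

section
/- W.h.p. the random graph G(n,p) with p ≥ α(n)·ln(n)/n and α(n) → ∞ satisfies: for every subset S of vertices, e(S, V∖S) = |S|(n-|S|)p(1 ± √8·α(n)^{-1/2}). In particular every vertex has degree (1 ± 3α(n)^{-1/2})pn. -/
open Finset MeasureTheory Filter

/-- The graph on `Fin n` determined by edge indicators `ω`. -/
def ERGraph (n : ℕ) (ω : Sym2 (Fin n) → Bool) : SimpleGraph (Fin n) where
  Adj a b := a ≠ b ∧ ω s(a, b) = true
  symm := by
    constructor
    intro a b h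
    exact ⟨h.1.symm, by rw [Sym2.eq_swap]; exact h.2⟩
  loopless := by constructor; intro a h; exact h.1 rfl

instance (n : ℕ) (ω : Sym2 (Fin n) → Bool) : DecidableRel (ERGraph n ω).Adj :=
  fun a b => show Decidable (a ≠ b ∧ ω s(a, b) = true) from inferInstance

/-- The Bernoulli measure on `Bool` with success probability `p`. -/
noncomputable def bernoulliMeasure (p : ℝ) : Measure Bool :=
  ENNReal.ofReal p • Measure.dirac true + ENNReal.ofReal (1 - p) • Measure.dirac false

/-- The distribution of `G(n,p)`: independent Bernoulli(p) indicators on all pairs. -/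
noncomputable def ERMeasure (n : ℕ) (p : ℝ) : Measure (Sym2 (Fin n) → Bool) :=
  Measure.pi fun _ => bernoulliMeasure p

open Real ProbabilityTheory

lemma smul_dirac_finite {α : Type*} [MeasurableSpace α] (c : ℝ) (a : α) :
    IsFiniteMeasure (ENNReal.ofReal c • Measure.dirac a) := by
  constructor
  simp [ENNReal.ofReal_lt_top]

instance (p : ℝ) : IsFiniteMeasure (bernoulliMeasure p) := by
  haveI := smul_dirac_finite p (true)
  haveI := smul_dirac_finite (1 - p) (false)
  unfold _root_.bernoulliMeasure
  infer_instance

lemma bernoulli_prob {p : ℝ} (h0 : 0 ≤ p) (h1 : p ≤ 1) :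
    IsProbabilityMeasure (bernoulliMeasure p) := by
  constructor
  simp [_root_.bernoulliMeasure]
  rw [← ENNReal.ofReal_add h0 (by linarith), ← ENNReal.ofReal_one]
  congr 1; ring

lemma bernoulli_integral {p : ℝ} (h0 : 0 ≤ p) (h1 : p ≤ 1) (g : Bool → ℝ) :
    ∫ b, g b ∂bernoulliMeasure p = p * g true + (1 - p) * g false := by
  haveI := smul_dirac_finite p (true)
  haveI := smul_dirac_finite (1 - p) (false)
  rw [_root_.bernoulliMeasure, integral_add_measure (Integrable.of_finite) (Integrable.of_finite),
    integral_smul_measure, integral_smul_measure, integral_dirac, integral_dirac,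
    ENNReal.toReal_ofReal h0, ENNReal.toReal_ofReal (by linarith)]
  simp [smul_eq_mul]

lemma exp_cubic_bound {x : ℝ} (hx : |x| ≤ 1) :
    Real.exp x ≤ 1 + x + x^2/2 + (2/9) * |x|^3 := by
  have h := Real.exp_bound hx (by norm_num : 0 < 3)
  have h2 : ∑ i ∈ Finset.range 3, x ^ i / (Nat.factorial i : ℝ) = 1 + x + x^2/2 := by
    simp [Finset.sum_range_succ, Nat.factorial]
  rw [h2] at h
  have h4 : (((3:ℕ).succ : ℝ) / ((Nat.factorial 3 : ℝ) * ((3:ℕ):ℝ))) = 2/9 := by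
    norm_num [Nat.factorial]
  rw [h4] at h
  have := abs_le.1 h
  linarith [this.2]

lemma exp_taylor_up {ε : ℝ} (h0 : 0 ≤ ε) (h1 : ε ≤ 3/4) :
    Real.exp ε - 1 - ε - ε^2 ≤ -(ε^2)/3 := by
  have h := exp_cubic_bound (x := ε) (by rw [abs_of_nonneg h0]; linarith)
  rw [abs_of_nonneg h0] at h
  nlinarith [sq_nonneg ε, pow_nonneg h0 3]

lemma exp_taylor_down {ε : ℝ} (h0 : 0 ≤ ε) (h1 : ε ≤ 3/4) :
    Real.exp (-ε) - 1 + ε - ε^2 ≤ -(ε^2)/3 := by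
  have h := exp_cubic_bound (x := -ε) (by rw [abs_of_nonpos (by linarith)]; linarith)
  rw [abs_of_nonpos (by linarith : -ε ≤ 0)] at h
  nlinarith [sq_nonneg ε, pow_nonneg h0 3]

lemma ER_mgf (n : ℕ) {p : ℝ} (h0 : 0 ≤ p) (h1 : p ≤ 1) (t : ℝ)
    (E : Finset (Sym2 (Fin n))) :
    ∫ ω, Real.exp (t * ∑ q ∈ E, (if ω q then (1:ℝ) else 0)) ∂ERMeasure n p
      = (p * Real.exp t + (1 - p)) ^ E.card := by
  classical
  letI : MeasureSpace Bool := ⟨bernoulliMeasure p⟩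
  haveI : SigmaFinite (volume : Measure Bool) :=
    (by infer_instance : SigmaFinite (bernoulliMeasure p))
  have hvol : ERMeasure n p = (volume : Measure (Sym2 (Fin n) → Bool)) := rfl
  set f : Sym2 (Fin n) → Bool → ℝ :=
    fun q b => if q ∈ E then Real.exp (t * (if b then (1:ℝ) else 0)) else 1 with hf
  have hint : ∀ q, (∫ b, f q b) = if q ∈ E then p * Real.exp t + (1 - p) else 1 := by
    intro q
    have : (∫ b, f q b) = ∫ b, f q b ∂bernoulliMeasure p := rfl
    rw [this, bernoulli_integral h0 h1]
    by_cases hq : q ∈ E <;> simp [hf, hq] <;> ring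
  calc ∫ ω, Real.exp (t * ∑ q ∈ E, (if ω q then (1:ℝ) else 0)) ∂ERMeasure n p
      = ∫ ω : Sym2 (Fin n) → Bool, ∏ q : Sym2 (Fin n), f q (ω q) := by
        rw [hvol]
        congr 1
        funext ω
        rw [mul_sum, Real.exp_sum]
        rw [← Finset.prod_subset (Finset.subset_univ E)]
        · exact Finset.prod_congr rfl (fun q hq => by simp [hf, hq])
        · intro q _ hq; simp [hf, hq]
    _ = ∏ q : Sym2 (Fin n), ∫ b, f q b :=
        MeasureTheory.integral_fintype_prod_eq_prod f
    _ = (p * Real.exp t + (1 - p)) ^ E.card := by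
        simp_rw [hint]
        rw [Finset.prod_ite_mem, Finset.univ_inter, Finset.prod_const]

lemma ER_prob (n : ℕ) {p : ℝ} (h0 : 0 ≤ p) (h1 : p ≤ 1) :
    IsProbabilityMeasure (ERMeasure n p) := by
  haveI := bernoulli_prob h0 h1
  unfold ERMeasure
  infer_instance

lemma chernoff (n : ℕ) {p ε : ℝ} (h0 : 0 ≤ p) (h1 : p ≤ 1) (hε0 : 0 ≤ ε) (hε : ε ≤ 3/4)
    (E : Finset (Sym2 (Fin n))) :
    ERMeasure n p {ω | ¬ |(∑ q ∈ E, if ω q then (1:ℝ) else 0) - (E.card : ℝ) * p| ≤ ε * ((E.card : ℝ) * p)}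
      ≤ ENNReal.ofReal (2 * Real.exp (-(ε^2 * ((E.card : ℝ) * p)) / 3)) := by
  classical
  haveI := ER_prob n h0 h1
  set μ := ERMeasure n p
  set X : (Sym2 (Fin n) → Bool) → ℝ := fun ω => ∑ q ∈ E, if ω q then (1:ℝ) else 0 with hX
  set m : ℝ := (E.card : ℝ) with hm
  have hm0 : 0 ≤ m := Nat.cast_nonneg _
  have hmp0 : 0 ≤ m * p := mul_nonneg hm0 h0
  -- subset into two tails
  have hsub : {ω | ¬ |X ω - m * p| ≤ ε * (m * p)} ⊆
      {ω | (1 + ε) * (m * p) ≤ X ω} ∪ {ω | -((1 - ε) * (m * p)) ≤ -X ω} := by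
    intro ω hω
    simp only [Set.mem_setOf_eq, not_le] at hω
    rcases lt_abs.mp hω with h | h
    · left; show (1 + ε) * (m * p) ≤ X ω; nlinarith
    · right; show -((1 - ε) * (m * p)) ≤ -X ω; nlinarith
  refine le_trans (measure_mono hsub) (le_trans (measure_union_le _ _) ?_)
  -- upper tail
  have hintA : Integrable (fun ω => Real.exp (ε * X ω)) μ := Integrable.of_finite
  have hA := measure_ge_le_exp_mul_mgf (μ := μ) (X := X) ((1 + ε) * (m * p)) hε0 hintA
  have hmgfA : mgf X μ ε = (p * Real.exp ε + (1 - p)) ^ E.card := ER_mgf n h0 h1 ε E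
  -- lower tail
  have hintB : Integrable (fun ω => Real.exp (ε * (-X ω))) μ := Integrable.of_finite
  have hB := measure_ge_le_exp_mul_mgf (μ := μ) (X := fun ω => -X ω)
    (-((1 - ε) * (m * p))) hε0 hintB
  have hmgfB : mgf (fun ω => -X ω) μ ε = (p * Real.exp (-ε) + (1 - p)) ^ E.card := by
    have := ER_mgf n h0 h1 (-ε) E
    rw [mgf]
    rw [← this]
    congr 1
    funext ω
    ring_nf
    rfl
  -- real bounds
  have hbase_up : (p * Real.exp ε + (1 - p)) ^ E.card ≤ Real.exp (m * p * (Real.exp ε - 1)) := by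
    have hb : p * Real.exp ε + (1 - p) ≤ Real.exp (p * (Real.exp ε - 1)) := by
      have := Real.add_one_le_exp (p * (Real.exp ε - 1))
      linarith
    have hb0 : 0 ≤ p * Real.exp ε + (1 - p) := by
      have := Real.exp_pos ε; nlinarith
    calc (p * Real.exp ε + (1 - p)) ^ E.card
        ≤ (Real.exp (p * (Real.exp ε - 1))) ^ E.card := pow_le_pow_left₀ hb0 hb _
      _ = Real.exp (m * p * (Real.exp ε - 1)) := by
          rw [← Real.exp_nat_mul, hm]; ring_nf
  have hbase_down : (p * Real.exp (-ε) + (1 - p)) ^ E.card ≤ Real.exp (m * p * (Real.exp (-ε) - 1)) := by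
    have hb : p * Real.exp (-ε) + (1 - p) ≤ Real.exp (p * (Real.exp (-ε) - 1)) := by
      have := Real.add_one_le_exp (p * (Real.exp (-ε) - 1))
      linarith
    have hb0 : 0 ≤ p * Real.exp (-ε) + (1 - p) := by
      have h2 : Real.exp (-ε) ≤ 1 := Real.exp_le_one_iff.mpr (by linarith)
      have h3 := Real.exp_pos (-ε); nlinarith
    calc (p * Real.exp (-ε) + (1 - p)) ^ E.card
        ≤ (Real.exp (p * (Real.exp (-ε) - 1))) ^ E.card := pow_le_pow_left₀ hb0 hb _
      _ = Real.exp (m * p * (Real.exp (-ε) - 1)) := by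
          rw [← Real.exp_nat_mul, hm]; ring_nf
  have hup : (μ {ω | (1 + ε) * (m * p) ≤ X ω}).toReal ≤ Real.exp (-(ε^2 * (m * p)) / 3) := by
    rw [hmgfA] at hA
    refine hA.trans ?_
    calc Real.exp (-ε * ((1 + ε) * (m * p))) * (p * Real.exp ε + (1 - p)) ^ E.card
        ≤ Real.exp (-ε * ((1 + ε) * (m * p))) * Real.exp (m * p * (Real.exp ε - 1)) := by
          exact mul_le_mul_of_nonneg_left hbase_up (Real.exp_pos _).le
      _ = Real.exp (m * p * (Real.exp ε - 1 - ε - ε^2)) := by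
          rw [← Real.exp_add]; ring_nf
      _ ≤ Real.exp (-(ε^2 * (m * p)) / 3) := by
          apply Real.exp_le_exp.mpr
          have := exp_taylor_up hε0 hε
          nlinarith [hmp0]
  have hdown : (μ {ω | -((1 - ε) * (m * p)) ≤ -X ω}).toReal ≤ Real.exp (-(ε^2 * (m * p)) / 3) := by
    rw [hmgfB] at hB
    refine hB.trans ?_
    calc Real.exp (-ε * -((1 - ε) * (m * p))) * (p * Real.exp (-ε) + (1 - p)) ^ E.card
        ≤ Real.exp (-ε * -((1 - ε) * (m * p))) * Real.exp (m * p * (Real.exp (-ε) - 1)) := by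
          exact mul_le_mul_of_nonneg_left hbase_down (Real.exp_pos _).le
      _ = Real.exp (m * p * (Real.exp (-ε) - 1 + ε - ε^2)) := by
          rw [← Real.exp_add]; ring_nf
      _ ≤ Real.exp (-(ε^2 * (m * p)) / 3) := by
          apply Real.exp_le_exp.mpr
          have := exp_taylor_down hε0 hε
          nlinarith [hmp0]
  -- back to ENNReal
  have hfin1 : μ {ω | (1 + ε) * (m * p) ≤ X ω} ≠ ⊤ := measure_ne_top _ _
  have hfin2 : μ {ω | -((1 - ε) * (m * p)) ≤ -X ω} ≠ ⊤ := measure_ne_top _ _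
  calc μ {ω | (1 + ε) * (m * p) ≤ X ω} + μ {ω | -((1 - ε) * (m * p)) ≤ -X ω}
      ≤ ENNReal.ofReal (Real.exp (-(ε^2 * (m * p)) / 3)) +
        ENNReal.ofReal (Real.exp (-(ε^2 * (m * p)) / 3)) := by
        gcongr
        · rw [← ENNReal.ofReal_toReal hfin1]; exact ENNReal.ofReal_le_ofReal hup
        · rw [← ENNReal.ofReal_toReal hfin2]; exact ENNReal.ofReal_le_ofReal hdown
    _ = ENNReal.ofReal (2 * Real.exp (-(ε^2 * (m * p)) / 3)) := by
        rw [← ENNReal.ofReal_add (Real.exp_pos _).le (Real.exp_pos _).le]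
        congr 1; ring

noncomputable def crossPairs (n : ℕ) (S : Finset (Fin n)) : Finset (Sym2 (Fin n)) :=
  (Sᶜ ×ˢ S).image (fun z => s(z.1, z.2))

lemma crossPairs_injOn (n : ℕ) (S : Finset (Fin n)) :
    Set.InjOn (fun z : Fin n × Fin n => s(z.1, z.2)) ↑(Sᶜ ×ˢ S) := by
  rintro ⟨a, b⟩ hab ⟨c, d⟩ hcd h
  simp only [Finset.coe_product, Set.mem_prod, Finset.mem_coe, Finset.mem_compl] at hab hcd
  simp only [Sym2.eq, Sym2.rel_iff', Prod.mk.injEq, Prod.swap_prod_mk] at h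
  rcases h with ⟨h1, h2⟩ | ⟨h1, h2⟩
  · simp [h1, h2]
  · exact absurd (h1 ▸ hcd.2) hab.1

lemma crossPairs_card (n : ℕ) (S : Finset (Fin n)) :
    (crossPairs n S).card = Sᶜ.card * S.card := by
  rw [crossPairs, Finset.card_image_of_injOn (crossPairs_injOn n S), Finset.card_product]

lemma cross_count (n : ℕ) (ω : Sym2 (Fin n) → Bool) (S : Finset (Fin n)) :
    ∑ v ∈ Sᶜ, (((ERGraph n ω).neighborFinset v ∩ S).card : ℝ)
      = ∑ q ∈ crossPairs n S, (if ω q then (1:ℝ) else 0) := by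
  rw [crossPairs, Finset.sum_image (fun a ha b hb h => crossPairs_injOn n S ha hb h)]
  rw [Finset.sum_product]
  refine Finset.sum_congr rfl (fun v hv => ?_)
  have hvS : v ∉ S := Finset.mem_compl.mp hv
  have hfil : (ERGraph n ω).neighborFinset v ∩ S = S.filter (fun u => ω s(v, u) = true) := by
    ext u
    simp only [Finset.mem_inter, SimpleGraph.mem_neighborFinset, Finset.mem_filter]
    constructor
    · rintro ⟨⟨_, h2⟩, h3⟩; exact ⟨h3, h2⟩
    · rintro ⟨h3, h2⟩
      exact ⟨⟨fun h => hvS (h ▸ h3), h2⟩, h3⟩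
  rw [hfil]
  rw [Finset.sum_ite, Finset.sum_const, Finset.sum_const]
  simp

lemma union_bound (n : ℕ) {p ε : ℝ} (h0 : 0 ≤ p) (h1 : p ≤ 1) (hε0 : 0 ≤ ε) (hε34 : ε ≤ 3/4)
    (hεp : 8 * Real.log n / n ≤ ε^2 * p) :
    ERMeasure n p {ω | ¬ ∀ S : Finset (Fin n),
        |(∑ v ∈ Sᶜ, (((ERGraph n ω).neighborFinset v ∩ S).card : ℝ)) -
            (S.card : ℝ) * ((n : ℝ) - S.card) * p| ≤
          ε * ((S.card : ℝ) * ((n : ℝ) - S.card) * p)}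
      ≤ ENNReal.ofReal (4 * ((1 + Real.exp (-(4/3) * Real.log n))^n - 1)) := by
  classical
  set x : ℝ := Real.exp (-(4/3) * Real.log n) with hxdef
  have hlogn : 0 ≤ Real.log n := Real.log_natCast_nonneg n
  have hx0 : 0 < x := Real.exp_pos _
  have hx1 : x ≤ 1 := Real.exp_le_one_iff.mpr (by nlinarith)
  set P : Finset (Fin n) → Set (Sym2 (Fin n) → Bool) := fun S =>
    {ω | ¬ |(∑ v ∈ Sᶜ, (((ERGraph n ω).neighborFinset v ∩ S).card : ℝ)) -
            (S.card : ℝ) * ((n : ℝ) - S.card) * p| ≤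
          ε * ((S.card : ℝ) * ((n : ℝ) - S.card) * p)} with hP
  have hset : {ω : Sym2 (Fin n) → Bool | ¬ ∀ S : Finset (Fin n),
        |(∑ v ∈ Sᶜ, (((ERGraph n ω).neighborFinset v ∩ S).card : ℝ)) -
            (S.card : ℝ) * ((n : ℝ) - S.card) * p| ≤
          ε * ((S.card : ℝ) * ((n : ℝ) - S.card) * p)} = ⋃ S, P S := by
    ext ω; simp [hP, not_forall]
  rw [hset]
  -- the per-set bound
  set g : Finset (Fin n) → ℝ := fun S =>
    if S = ∅ ∨ S = univ then 0 else 2 * (x ^ S.card + x ^ (n - S.card)) with hg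
  have hg0 : ∀ S, 0 ≤ g S := by
    intro S
    by_cases h : S = ∅ ∨ S = univ
    · simp [hg, h]
    · simp only [hg, if_neg h]
      positivity
  have hperset : ∀ S : Finset (Fin n), ERMeasure n p (P S) ≤ ENNReal.ofReal (g S) := by
    intro S
    by_cases htriv : S = ∅ ∨ S = univ
    · have hPempty : P S = ∅ := by
        rw [Set.eq_empty_iff_forall_notMem]
        intro ω hω
        apply hω
        rcases htriv with h | h
        · subst h
          simp
        · subst h
          simp [Finset.card_fin]
      rw [hPempty]
      simp [hg0 S]
    · push_neg at htriv
      obtain ⟨hne, hnu⟩ := htriv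
      have hk1 : 1 ≤ S.card := Finset.card_pos.mpr hne
      have hkn : S.card ≤ n := le_trans (Finset.card_le_univ S) (by simp)
      have hklt : S.card < n := by
        rcases lt_or_eq_of_le hkn with h | h
        · exact h
        · exact absurd ((Finset.card_eq_iff_eq_univ S).mp (by simp [h])) hnu
      have hn2 : 2 ≤ n := by omega
      have hcast : (S.card : ℝ) * ((n : ℝ) - S.card) = ((crossPairs n S).card : ℝ) := by
        rw [crossPairs_card, Finset.card_compl, Fintype.card_fin]
        push_cast [Nat.cast_sub hkn]
        ring
      have hPeq : P S = {ω | ¬ |(∑ q ∈ crossPairs n S, if ω q then (1:ℝ) else 0) -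
          ((crossPairs n S).card : ℝ) * p| ≤ ε * (((crossPairs n S).card : ℝ) * p)} := by
        rw [hP]
        ext ω
        rw [Set.mem_setOf_eq, Set.mem_setOf_eq, cross_count n ω S, hcast]
      rw [hPeq]
      refine (chernoff n h0 h1 hε0 hε34 (crossPairs n S)).trans ?_
      apply ENNReal.ofReal_le_ofReal
      have hcond : ¬(S = ∅ ∨ S = univ) := by push_neg; exact ⟨hne, hnu⟩
      simp only [hg, if_neg hcond]
      -- real exponent chain
      set k : ℝ := (S.card : ℝ) with hkdef
      set N : ℝ := (n : ℝ) with hNdef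
      set L : ℝ := Real.log n with hLdef
      have hNk : ((n - S.card : ℕ) : ℝ) = N - k := by
        rw [Nat.cast_sub hkn]
      have hm : ((crossPairs n S).card : ℝ) = (N - k) * k := by
        rw [crossPairs_card, Finset.card_compl, Fintype.card_fin]
        push_cast [Nat.cast_sub hkn]
        ring
      set mR : ℝ := ((crossPairs n S).card : ℝ) with hmdef
      have hmR0 : 0 ≤ mR := Nat.cast_nonneg _
      have hk1' : (1:ℝ) ≤ k := by rw [hkdef]; exact_mod_cast hk1
      have hkn' : k + 1 ≤ N := by rw [hkdef, hNdef]; exact_mod_cast hklt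
      have hN0 : (0:ℝ) < N := by rw [hNdef]; exact_mod_cast (by omega : 0 < n)
      set j : ℕ := min S.card (n - S.card) with hjdef
      have hc1 : (j : ℝ) * N ≤ 2 * mR := by
        rw [hm]
        rcases min_cases S.card (n - S.card) with ⟨hj, hle⟩ | ⟨hj, hle⟩
        · have hjk : (j : ℝ) = k := by rw [hjdef, hj]
          have hle' : k ≤ N - k := by
            have : (S.card : ℝ) ≤ ((n - S.card : ℕ) : ℝ) := by exact_mod_cast hle
            rw [hNk] at this; exact this
          nlinarith
        · have hjk : (j : ℝ) = N - k := by rw [hjdef, hj, hNk]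
          have hle' : N - k ≤ k := by
            have : ((n - S.card : ℕ) : ℝ) ≤ (S.card : ℝ) := by exact_mod_cast hle.le
            rw [hNk] at this; exact this
          nlinarith
      have hx_as : ∀ i : ℕ, x ^ i = Real.exp ((i : ℝ) * (-(4/3) * L)) := by
        intro i
        rw [hxdef, ← Real.exp_nat_mul]
      have hexp1 : Real.exp (-(ε^2 * (mR * p)) / 3) ≤ x ^ j := by
        rw [hx_as j]
        apply Real.exp_le_exp.mpr
        have h1' : 8 * L * mR / N ≤ ε^2 * (mR * p) := by
          have := mul_le_mul_of_nonneg_right hεp hmR0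
          calc 8 * L * mR / N = 8 * L / N * mR := by ring
            _ ≤ ε^2 * p * mR := this
            _ = ε^2 * (mR * p) := by ring
        have h2' : 4 * (j:ℝ) * L ≤ 8 * L * mR / N := by
          rw [le_div_iff₀ hN0]
          nlinarith
        linarith
      have hxj : x ^ j ≤ x ^ S.card + x ^ (n - S.card) := by
        rcases min_cases S.card (n - S.card) with ⟨hj, _⟩ | ⟨hj, _⟩
        · rw [hjdef, hj]
          exact le_add_of_nonneg_right (by positivity)
        · rw [hjdef, hj]
          exact le_add_of_nonneg_left (by positivity)
      have := hexp1.trans hxj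
      linarith
  -- sum up
  have hA : ∑ S : Finset (Fin n), x ^ S.card = (1 + x)^n := by
    have h := Finset.prod_add (fun _ : Fin n => x) (fun _ : Fin n => (1:ℝ)) univ
    rw [Finset.prod_const, Finset.card_fin] at h
    rw [Finset.powerset_univ] at h
    simp only [Finset.prod_const, Finset.prod_const_one, one_pow, mul_one, Finset.card_fin] at h
    rw [add_comm x 1] at h
    exact h.symm
  have hA' : ∑ S : Finset (Fin n), x ^ (n - S.card) = (1 + x)^n := by
    rw [← hA]
    apply Fintype.sum_bijective (fun S : Finset (Fin n) => Sᶜ)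
      (Function.Involutive.bijective (fun S => compl_compl S))
    intro S
    rw [Finset.card_compl, Fintype.card_fin]
  have hsum1 : ∑ S : Finset (Fin n), (if S = ∅ then 0 else 2 * x ^ S.card)
      = 2 * (1 + x)^n - 2 := by
    rw [← Finset.add_sum_erase univ _ (Finset.mem_univ (∅ : Finset (Fin n)))]
    rw [if_pos rfl, zero_add]
    rw [Finset.sum_congr rfl (fun S hS => if_neg (Finset.mem_erase.mp hS).1)]
    have h2 : ∑ S : Finset (Fin n), 2 * x ^ S.card = 2 * (1 + x)^n := by
      rw [← Finset.mul_sum, hA]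
    rw [← Finset.add_sum_erase univ (fun S => 2 * x ^ S.card) (Finset.mem_univ (∅ : Finset (Fin n)))] at h2
    simp only [Finset.card_empty, pow_zero, mul_one] at h2
    linarith
  have hsum2 : ∑ S : Finset (Fin n), (if S = univ then 0 else 2 * x ^ (n - S.card))
      = 2 * (1 + x)^n - 2 := by
    rw [← Finset.add_sum_erase univ _ (Finset.mem_univ (univ : Finset (Fin n)))]
    rw [if_pos rfl, zero_add]
    rw [Finset.sum_congr rfl (fun S hS => if_neg (Finset.mem_erase.mp hS).1)]
    have h2 : ∑ S : Finset (Fin n), 2 * x ^ (n - S.card) = 2 * (1 + x)^n := by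
      rw [← Finset.mul_sum, hA']
    rw [← Finset.add_sum_erase univ (fun S => 2 * x ^ (n - S.card)) (Finset.mem_univ (univ : Finset (Fin n)))] at h2
    simp only [Finset.card_fin, Nat.sub_self, pow_zero, mul_one] at h2
    linarith
  have hrealsum : ∑ S : Finset (Fin n), g S ≤ 4 * ((1 + x)^n - 1) := by
    have hterm : ∀ S : Finset (Fin n), g S ≤
        (if S = ∅ then 0 else 2 * x ^ S.card) + (if S = univ then 0 else 2 * x ^ (n - S.card)) := by
      intro S
      by_cases htriv : S = ∅ ∨ S = univ
      · refine le_trans (le_of_eq ?_) (add_nonneg ?_ ?_)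
        · simp only [hg, if_pos htriv]
        · split <;> positivity
        · split <;> positivity
      · push_neg at htriv
        have hcond : ¬(S = ∅ ∨ S = univ) := by push_neg; exact htriv
        simp only [hg, if_neg hcond, if_neg htriv.1.ne_empty, if_neg htriv.2]
        exact le_of_eq (by ring)
    calc ∑ S : Finset (Fin n), g S
        ≤ ∑ S : Finset (Fin n), ((if S = ∅ then 0 else 2 * x ^ S.card) +
            (if S = univ then 0 else 2 * x ^ (n - S.card))) :=
          Finset.sum_le_sum (fun S _ => hterm S)
      _ = 4 * ((1 + x)^n - 1) := by
          rw [Finset.sum_add_distrib, hsum1, hsum2]; ring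
  calc ERMeasure n p (⋃ S, P S)
      ≤ ∑' S, ERMeasure n p (P S) := measure_iUnion_le _
    _ = ∑ S : Finset (Fin n), ERMeasure n p (P S) := tsum_fintype _
    _ ≤ ∑ S : Finset (Fin n), ENNReal.ofReal (g S) :=
        Finset.sum_le_sum (fun S _ => hperset S)
    _ = ENNReal.ofReal (∑ S : Finset (Fin n), g S) :=
        (ENNReal.ofReal_sum_of_nonneg (fun S _ => hg0 S)).symm
    _ ≤ ENNReal.ofReal (4 * ((1 + x)^n - 1)) := ENNReal.ofReal_le_ofReal hrealsum

lemma deg_count (n : ℕ) (ω : Sym2 (Fin n) → Bool) (v : Fin n) :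
    ∑ w ∈ ({v} : Finset (Fin n))ᶜ, (((ERGraph n ω).neighborFinset w ∩ {v}).card : ℝ)
      = ((ERGraph n ω).degree v : ℝ) := by
  classical
  have hterm : ∀ w : Fin n, (((ERGraph n ω).neighborFinset w ∩ {v}).card : ℝ)
      = if (ERGraph n ω).Adj v w then (1:ℝ) else 0 := by
    intro w
    by_cases h : (ERGraph n ω).Adj v w
    · rw [Finset.inter_singleton_of_mem (SimpleGraph.mem_neighborFinset _ _ _ |>.mpr h.symm)]
      simp [h]
    · rw [Finset.inter_singleton_of_notMem
        (fun hc => h ((SimpleGraph.mem_neighborFinset _ _ _ |>.mp hc).symm))]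
      simp [h]
  simp_rw [hterm]
  rw [Finset.sum_ite, Finset.sum_const, Finset.sum_const]
  simp only [nsmul_eq_mul, mul_one, mul_zero, add_zero]
  congr 1
  have : ({v} : Finset (Fin n))ᶜ.filter ((ERGraph n ω).Adj v)
      = univ.filter ((ERGraph n ω).Adj v) := by
    ext w
    simp only [Finset.mem_filter, Finset.mem_compl, Finset.mem_singleton, Finset.mem_univ,
      true_and]
    exact ⟨fun h => h.2, fun h => ⟨fun hw => (ERGraph n ω).loopless.irrefl v (hw ▸ h), h⟩⟩
  rw [this, SimpleGraph.degree, SimpleGraph.neighborFinset_eq_filter]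

lemma Bto0 : Tendsto (fun n : ℕ => 4 * ((1 + Real.exp (-(4/3) * Real.log n))^n - 1))
    atTop (nhds 0) := by
  have hlog : Tendsto (fun n : ℕ => Real.log n) atTop atTop :=
    Real.tendsto_log_atTop.comp tendsto_natCast_atTop_atTop
  have ht : Tendsto (fun n : ℕ => Real.exp (-(1/3) * Real.log n)) atTop (nhds 0) := by
    apply Real.tendsto_exp_atBot.comp
    exact Tendsto.const_mul_atTop_of_neg (by norm_num) hlog
  have hC : Tendsto (fun n : ℕ => 4 * (Real.exp ((n:ℝ) * Real.exp (-(4/3) * Real.log n)) - 1))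
      atTop (nhds 0) := by
    have harg : Tendsto (fun n : ℕ => (n:ℝ) * Real.exp (-(4/3) * Real.log n)) atTop (nhds 0) := by
      apply ht.congr'
      filter_upwards [eventually_ge_atTop 1] with n hn
      have hn0 : (0:ℝ) < n := by exact_mod_cast hn
      calc Real.exp (-(1/3) * Real.log n)
          = Real.exp (Real.log n) * Real.exp (-(4/3) * Real.log n) := by
            rw [← Real.exp_add]; congr 1; ring
        _ = (n:ℝ) * Real.exp (-(4/3) * Real.log n) := by rw [Real.exp_log hn0]
    have := (Real.continuous_exp.tendsto 0).comp harg
    rw [Real.exp_zero] at this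
    have h2 : Tendsto (fun n : ℕ => Real.exp ((n:ℝ) * Real.exp (-(4/3) * Real.log n)) - 1)
        atTop (nhds 0) := by
      have := this.sub_const 1
      simpa using this
    simpa using h2.const_mul 4
  apply tendsto_of_tendsto_of_tendsto_of_le_of_le tendsto_const_nhds hC
  · intro n
    have hx0 : (0:ℝ) ≤ Real.exp (-(4/3) * Real.log n) := (Real.exp_pos _).le
    have h1 : (1:ℝ) ≤ (1 + Real.exp (-(4/3) * Real.log n))^n :=
      one_le_pow₀ (by linarith)
    linarith
  · intro n
    have hx0 : (0:ℝ) ≤ Real.exp (-(4/3) * Real.log n) := (Real.exp_pos _).le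
    have h1 : (1 + Real.exp (-(4/3) * Real.log n))^n
        ≤ Real.exp ((n:ℝ) * Real.exp (-(4/3) * Real.log n)) := by
      calc (1 + Real.exp (-(4/3) * Real.log n))^n
          ≤ (Real.exp (Real.exp (-(4/3) * Real.log n)))^n := by
            apply pow_le_pow_left₀ (by linarith)
            have := Real.add_one_le_exp (Real.exp (-(4/3) * Real.log n))
            linarith
        _ = Real.exp ((n:ℝ) * Real.exp (-(4/3) * Real.log n)) := by
            rw [← Real.exp_nat_mul]
    linarith

lemma sqrt8_le : Real.sqrt 8 ≤ 2.9 := by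
  nlinarith [Real.sq_sqrt (show (0:ℝ) ≤ 8 by norm_num), Real.sqrt_nonneg 8]

lemma sqrt_ge_10 {N : ℝ} (h : 100 ≤ N) : 10 ≤ Real.sqrt N := by
  nlinarith [Real.sq_sqrt (show (0:ℝ) ≤ N by linarith), Real.sqrt_nonneg N]

lemma deg_numeric {D N pp η s8 : ℝ} (hs8 : 0 ≤ s8) (hη : 0 ≤ η) (hpp : 0 ≤ pp)
    (hN1 : 1 ≤ N) (hc : 1 ≤ (3 - s8) * (η * N))
    (hS : |D - (N - 1) * pp| ≤ s8 * η * ((N - 1) * pp)) :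
    |D - pp * N| ≤ 3 * η * (pp * N) := by
  have htri : |D - pp * N| ≤ |D - (N - 1) * pp| + pp := by
    have heq : D - pp * N = (D - (N - 1) * pp) + (-pp) := by ring
    rw [heq]
    refine (abs_add_le _ _).trans ?_
    rw [abs_neg, abs_of_nonneg hpp]
  have hppc : pp ≤ (3 - s8) * (η * N) * pp :=
    le_of_eq_of_le (one_mul pp).symm (mul_le_mul_of_nonneg_right hc hpp)
  nlinarith [mul_nonneg (mul_nonneg hs8 hη) hpp]

/-- Lemma 3 of the paper: w.h.p. `G(n,p)` with `p ≥ α(n)·ln n/n`, `α(n) → ∞`,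
satisfies `e(S, V∖S) = |S|(n-|S|)p(1 ± √8·α(n)^{-1/2})` for every vertex subset `S`;
in particular every vertex has degree `(1 ± 3α(n)^{-1/2})pn`. -/
theorem edges_between_all_sets (α p : ℕ → ℝ)
    (hα0 : ∀ n, 0 < α n) (hαtop : Tendsto α atTop atTop)
    (hp : ∀ n, α n * Real.log n / n ≤ p n) (hp1 : ∀ n, p n ≤ 1) :
    Tendsto (fun n =>
      ERMeasure n (p n) {ω | (∀ S : Finset (Fin n),
          |(∑ v ∈ Sᶜ, (((ERGraph n ω).neighborFinset v ∩ S).card : ℝ)) -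
              (S.card : ℝ) * ((n : ℝ) - S.card) * p n| ≤
            Real.sqrt 8 * (α n) ^ (-(1 / 2 : ℝ)) *
              ((S.card : ℝ) * ((n : ℝ) - S.card) * p n)) ∧
        (∀ v : Fin n,
          |((ERGraph n ω).degree v : ℝ) - p n * n| ≤
            3 * (α n) ^ (-(1 / 2 : ℝ)) * (p n * n))})
      atTop (nhds 1) := by
  have hp0 : ∀ n, 0 ≤ p n := fun n =>
    le_trans (div_nonneg (mul_nonneg (hα0 n).le (Real.log_natCast_nonneg n))
      (Nat.cast_nonneg n)) (hp n)
  set B : ℕ → ℝ := fun n => 4 * ((1 + Real.exp (-(4/3) * Real.log n))^n - 1) with hB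
  have hlow : Tendsto (fun n => 1 - ENNReal.ofReal (B n)) atTop (nhds 1) := by
    have h0 : Tendsto (fun n => ENNReal.ofReal (B n)) atTop (nhds 0) := by
      have h1 := ENNReal.tendsto_ofReal (Bto0)
      rw [ENNReal.ofReal_zero] at h1
      exact h1
    have h2 := ENNReal.Tendsto.sub
      (tendsto_const_nhds : Tendsto (fun _ : ℕ => (1:ENNReal)) atTop (nhds 1)) h0
      (Or.inl ENNReal.one_ne_top)
    simpa using h2
  refine tendsto_of_tendsto_of_tendsto_of_le_of_le' hlow tendsto_const_nhds ?_ ?_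
  · -- eventual lower bound
    filter_upwards [hαtop.eventually_ge_atTop 15, eventually_ge_atTop 100] with n hα15 hn100
    set A : ℝ := α n with hAdef
    set pp : ℝ := p n with hppdef
    set N : ℝ := (n : ℝ) with hNdef
    set L : ℝ := Real.log n with hLdef
    set η : ℝ := A ^ (-(1/2 : ℝ)) with hηdef
    set ε : ℝ := Real.sqrt 8 * η with hεdef
    have hA0 : 0 < A := hα0 n
    have hN0 : (0:ℝ) < N := by rw [hNdef]; exact_mod_cast (by omega : 0 < n)
    have hN100 : (100:ℝ) ≤ N := by rw [hNdef]; exact_mod_cast hn100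
    have hη : η = (Real.sqrt A)⁻¹ := by
      rw [hηdef, Real.rpow_neg hA0.le, ← Real.sqrt_eq_rpow]
    have hηpos : 0 < η := by rw [hη]; positivity
    have hε0 : 0 ≤ ε := by positivity
    have hε2 : ε^2 = 8 / A := by
      rw [hεdef, mul_pow, Real.sq_sqrt (by norm_num : (0:ℝ) ≤ 8), hη, inv_pow,
        Real.sq_sqrt hA0.le, div_eq_mul_inv]
    have hε34 : ε ≤ 3/4 := by
      have h1 : ε^2 ≤ 9/16 := by
        rw [hε2]
        rw [div_le_iff₀ hA0]
        nlinarith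
      nlinarith
    have hεp : 8 * L / N ≤ ε^2 * pp := by
      rw [hε2]
      have hkey : (8 / A) * (A * L / N) = 8 * L / N := by
        field_simp
      calc 8 * L / N = (8 / A) * (A * L / N) := hkey.symm
        _ ≤ (8 / A) * pp := by
            apply mul_le_mul_of_nonneg_left (hp n) (by positivity)
        _ = 8 / A * pp := rfl
    -- measure lower bound via union_bound
    set G1 : Set (Sym2 (Fin n) → Bool) := {ω | ∀ S : Finset (Fin n),
        |(∑ v ∈ Sᶜ, (((ERGraph n ω).neighborFinset v ∩ S).card : ℝ)) -
            (S.card : ℝ) * ((n : ℝ) - S.card) * pp| ≤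
          ε * ((S.card : ℝ) * ((n : ℝ) - S.card) * pp)} with hG1
    have hUB := union_bound n (hp0 n) (hp1 n) hε0 hε34 hεp
    have hG1c : ERMeasure n pp G1ᶜ ≤ ENNReal.ofReal (B n) := by
      have : G1ᶜ = {ω | ¬ ∀ S : Finset (Fin n),
        |(∑ v ∈ Sᶜ, (((ERGraph n ω).neighborFinset v ∩ S).card : ℝ)) -
            (S.card : ℝ) * ((n : ℝ) - S.card) * pp| ≤
          ε * ((S.card : ℝ) * ((n : ℝ) - S.card) * pp)} := by
        rw [hG1, Set.compl_setOf]
      rw [this, hB]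
      exact hUB
    haveI := ER_prob n (hp0 n) (hp1 n)
    have hG1low : 1 - ENNReal.ofReal (B n) ≤ ERMeasure n pp G1 := by
      have hcover : (1 : ENNReal) ≤ ERMeasure n pp G1 + ERMeasure n pp G1ᶜ := by
        have h1 : ERMeasure n pp (G1 ∪ G1ᶜ) ≤ ERMeasure n pp G1 + ERMeasure n pp G1ᶜ :=
          measure_union_le _ _
        rw [Set.union_compl_self] at h1
        rw [← measure_univ (μ := ERMeasure n pp)]
        exact h1
      have := tsub_le_iff_right.mpr (hcover.trans (add_le_add le_rfl hG1c))
      exact tsub_le_iff_right.mpr (hcover.trans (add_le_add le_rfl hG1c))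
    -- G1 implies the degree clause
    have hsub : G1 ⊆ {ω | (∀ S : Finset (Fin n),
          |(∑ v ∈ Sᶜ, (((ERGraph n ω).neighborFinset v ∩ S).card : ℝ)) -
              (S.card : ℝ) * ((n : ℝ) - S.card) * pp| ≤
            Real.sqrt 8 * η * ((S.card : ℝ) * ((n : ℝ) - S.card) * pp)) ∧
        (∀ v : Fin n,
          |((ERGraph n ω).degree v : ℝ) - pp * N| ≤ 3 * η * (pp * N))} := by
      intro ω hω
      rw [hG1, Set.mem_setOf_eq] at hω
      refine ⟨fun S => by rw [← hεdef]; exact hω S, fun v => ?_⟩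
      have hS := hω {v}
      rw [deg_count n ω v] at hS
      simp only [Finset.card_singleton, Nat.cast_one, one_mul] at hS
      set D : ℝ := ((ERGraph n ω).degree v : ℝ) with hD
      have h8 : Real.sqrt 8 ≤ 2.9 := sqrt8_le
      have h80 : 0 ≤ Real.sqrt 8 := Real.sqrt_nonneg 8
      have hL1 : 1 ≤ L := by
        rw [hLdef, Real.le_log_iff_exp_le (by rw [← hNdef]; exact hN0)]
        have := Real.exp_one_lt_d9
        rw [← hNdef]
        linarith [hN100]
      have hαn : A ≤ N := by
        have h1 : A * L / N ≤ 1 := le_trans (hp n) (hp1 n)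
        rw [div_le_one hN0] at h1
        nlinarith
      have hηn : (Real.sqrt N)⁻¹ ≤ η := by
        rw [hη]
        exact inv_anti₀ (Real.sqrt_pos.mpr hA0) (Real.sqrt_le_sqrt hαn)
      have hsN : Real.sqrt N * Real.sqrt N = N := Real.mul_self_sqrt hN0.le
      have hsN10 : 10 ≤ Real.sqrt N := sqrt_ge_10 hN100
      have hetaN : Real.sqrt N ≤ η * N := by
        have h1 : (Real.sqrt N)⁻¹ * N ≤ η * N :=
          mul_le_mul_of_nonneg_right hηn hN0.le
        have h2 : (Real.sqrt N)⁻¹ * N = Real.sqrt N := by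
          rw [inv_mul_eq_div, Real.div_sqrt]
        linarith [h2 ▸ h1]
      have hc : 1 ≤ (3 - Real.sqrt 8) * (η * N) := by
        have e1 : (0.1:ℝ) ≤ 3 - Real.sqrt 8 := by linarith
        have e2 : (10:ℝ) ≤ η * N := le_trans hsN10 hetaN
        calc (1:ℝ) = 0.1 * 10 := by norm_num
          _ ≤ (3 - Real.sqrt 8) * (η * N) := mul_le_mul e1 e2 (by norm_num) (by linarith)
      exact deg_numeric h80 hηpos.le (hp0 n) (by linarith) hc hS
    calc 1 - ENNReal.ofReal (B n) ≤ ERMeasure n pp G1 := hG1low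
      _ ≤ _ := measure_mono hsub
  · filter_upwards with n
    haveI := ER_prob n (hp0 n) (hp1 n)
    exact prob_le_one
end
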